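/- Jensen transport inequality: for fixed X_{N,1} = (x_2,...,x_N) and any y ∈ R^d, e^{-β F((y, X_{N,1}), μ_θ)} ≤ e^{(β/N) Fluct'[h^{μ_θ}] - β g*fluct'(y)} · (1/N) ∫ e^{-β F((z, X_{N,1}), μ_θ)} μ_θ(dz), where fluct' = Σ_{i=2}^N δ_{x_i} - μ_θ and Fluct'[φ] = ∫φ dfluct'. -/

import Mathlib

open MeasureTheory Real Finset
open scoped ENNReal

/-- The Coulomb potential `h^μ(z) = ∫ g(z - w) μ(dw)` generated by a measure `μ`. -/
noncomputable def coulombPot {d : ℕ} (g : EuclideanSpace ℝ (Fin d) → ℝ)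
    (μ : Measure (EuclideanSpace ℝ (Fin d))) (z : EuclideanSpace ℝ (Fin d)) : ℝ :=
  ∫ w, g (z - w) ∂μ

/-- The (expanded) jellium energy `F(X, μ)` of points `X` on background `μ`. -/
noncomputable def jellium {d n : ℕ} (g : EuclideanSpace ℝ (Fin d) → ℝ)
    (μ : Measure (EuclideanSpace ℝ (Fin d))) (X : Fin n → EuclideanSpace ℝ (Fin d)) : ℝ :=
  (1 / 2) * (∑ i, ∑ j, if i = j then 0 else g (X i - X j))
    - (∑ i, coulombPot g μ (X i)) + (1 / 2) * ∫ z, coulombPot g μ z ∂μ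

/-- Decomposition of the jellium energy of `(z, x)` into a `z`-dependent part and a constant. -/
lemma jellium_cons_decomp {d m : ℕ} (g : EuclideanSpace ℝ (Fin d) → ℝ)
    (hgsymm : ∀ z, g (-z) = g z)
    (μθ : Measure (EuclideanSpace ℝ (Fin d)))
    (x : Fin m → EuclideanSpace ℝ (Fin d)) (z : EuclideanSpace ℝ (Fin d)) :
    jellium g μθ (Fin.cons z x) =
      ((∑ i, g (z - x i)) - coulombPot g μθ z) +
      ((1 / 2) * (∑ i, ∑ j, if i = j then 0 else g (x i - x j))
        - (∑ i, coulombPot g μθ (x i)) + (1 / 2) * ∫ w, coulombPot g μθ w ∂μθ) := by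
  unfold jellium
  simp only [Fin.sum_univ_succ, Fin.cons_zero, Fin.cons_succ, Fin.succ_inj,
    if_pos rfl,
    show ∀ i : Fin m, ((0 : Fin (m+1)) = i.succ) = False from
      fun i => eq_false (Fin.succ_ne_zero i).symm,
    show ∀ i : Fin m, (i.succ = (0 : Fin (m+1))) = False from
      fun i => eq_false (Fin.succ_ne_zero i), if_false, if_true]
  have h1 : ∀ i : Fin m, g (x i - z) = g (z - x i) := fun i => by
    rw [← hgsymm (z - x i), neg_sub]
  simp only [h1]
  rw [Finset.sum_add_distrib]
  ring

/-- Jensen transport inequality: with `fluct' = ∑_{i=2}^N δ_{x_i} - μ_θ`,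
`Fluct'[φ] = ∫ φ dfluct'`, and `N = m + 1`,
`e^{-β F((y,X_{N,1}),μ_θ)} ≤ e^{(β/N) Fluct'[h^{μ_θ}] - β (g*fluct')(y)}
  · (1/N) ∫ e^{-β F((z,X_{N,1}),μ_θ)} μ_θ(dz)`. -/
theorem jensen_transport_inequality {d m : ℕ} (hd : 2 ≤ d) (hm : 1 ≤ m)
    (β : ℝ) (hβ : 0 < β)
    (g : EuclideanSpace ℝ (Fin d) → ℝ) (hgsymm : ∀ z, g (-z) = g z)
    (μθ : Measure (EuclideanSpace ℝ (Fin d))) [IsFiniteMeasure μθ]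
    (hmass : (μθ Set.univ).toReal = (m : ℝ) + 1)
    (x : Fin m → EuclideanSpace ℝ (Fin d)) (y : EuclideanSpace ℝ (Fin d))
    (hint1 : ∀ i, Integrable (fun z => g (z - x i)) μθ)
    (hint2 : Integrable (coulombPot g μθ) μθ)
    (hexpint : Integrable (fun z => Real.exp (-β * jellium g μθ (Fin.cons z x))) μθ) :
    Real.exp (-β * jellium g μθ (Fin.cons y x))
      ≤ Real.exp ((β / ((m : ℝ) + 1)) *
            ((∑ i, coulombPot g μθ (x i)) - ∫ z, coulombPot g μθ z ∂μθ)
          - β * ((∑ i, g (y - x i)) - coulombPot g μθ y))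
        * ((1 / ((m : ℝ) + 1)) *
            ∫ z, Real.exp (-β * jellium g μθ (Fin.cons z x)) ∂μθ) := by
  set N : ℝ := (m : ℝ) + 1 with hNdef
  have hN : 0 < N := by positivity
  set C : ℝ := (1 / 2) * (∑ i, ∑ j, if i = j then 0 else g (x i - x j))
        - (∑ i, coulombPot g μθ (x i)) + (1 / 2) * ∫ w, coulombPot g μθ w ∂μθ with hC
  set φ : EuclideanSpace ℝ (Fin d) → ℝ :=
    fun z => (∑ i, g (z - x i)) - coulombPot g μθ z with hφdef
  have hdec : ∀ z, jellium g μθ (Fin.cons z x) = φ z + C :=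
    fun z => jellium_cons_decomp g hgsymm μθ x z
  -- integrability of φ and of the energy
  have hφint : Integrable φ μθ := by
    apply Integrable.sub _ hint2
    exact integrable_finset_sum _ (fun i _ => hint1 i)
  have hFint : Integrable (fun z => jellium g μθ (Fin.cons z x)) μθ := by
    have := hφint.add (integrable_const C)
    exact this.congr (ae_of_all _ fun z => (hdec z).symm)
  -- mass of μθ
  have hμne : μθ Set.univ ≠ ⊤ := measure_ne_top μθ _
  have hμuniv : μθ Set.univ = ENNReal.ofReal N := by
    rw [← hmass, ENNReal.ofReal_toReal hμne]
  have hμne0 : μθ Set.univ ≠ 0 := by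
    rw [hμuniv]; simp [ENNReal.ofReal_eq_zero, not_le, hN]
  -- the normalized probability measure
  set c : ℝ≥0∞ := (μθ Set.univ)⁻¹ with hc
  have hcne_top : c ≠ ⊤ := by simp [hc, ENNReal.inv_ne_top, hμne0]
  have hctoReal : c.toReal = 1 / N := by
    rw [hc, ENNReal.toReal_inv, hmass, one_div]
  set ν : Measure (EuclideanSpace ℝ (Fin d)) := c • μθ with hν
  have hprob : IsProbabilityMeasure ν := by
    constructor
    rw [hν, Measure.smul_apply, smul_eq_mul, hc, ENNReal.inv_mul_cancel hμne0 hμne]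
  -- Jensen's inequality for exp on ν
  set f : EuclideanSpace ℝ (Fin d) → ℝ :=
    fun z => -β * jellium g μθ (Fin.cons z x) with hf
  have hfint : Integrable f ν := ((hFint.const_mul (-β)).smul_measure hcne_top)
  have hgfint : Integrable (Real.exp ∘ f) ν := by
    exact (hexpint.smul_measure hcne_top)
  have hjensen : Real.exp (∫ z, f z ∂ν) ≤ ∫ z, Real.exp (f z) ∂ν := by
    have := convexOn_exp.map_integral_le continuous_exp.continuousOn isClosed_univ
      (ae_of_all _ fun z => Set.mem_univ (f z)) hfint hgfint
    simpa using this
  -- compute the integrals with respect to ν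
  have hsmul : ∀ (u : EuclideanSpace ℝ (Fin d) → ℝ),
      ∫ z, u z ∂ν = (1 / N) * ∫ z, u z ∂μθ := by
    intro u
    rw [hν, integral_smul_measure, hctoReal, smul_eq_mul]
  -- compute ∫ φ dμθ
  have hcoul : ∀ i, ∫ z, g (z - x i) ∂μθ = coulombPot g μθ (x i) := by
    intro i
    unfold coulombPot
    apply integral_congr_ae (ae_of_all _ fun z => ?_)
    rw [← hgsymm (x i - z), neg_sub]
  have hφint_val : ∫ z, φ z ∂μθ =
      (∑ i, coulombPot g μθ (x i)) - ∫ w, coulombPot g μθ w ∂μθ := by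
    rw [hφdef]
    rw [integral_sub (integrable_finset_sum _ (fun i _ => hint1 i)) hint2]
    congr 1
    rw [integral_finset_sum _ (fun i _ => hint1 i)]
    exact Finset.sum_congr rfl fun i _ => hcoul i
  -- compute ∫ f dν
  have hfval : ∫ z, f z ∂ν =
      -(β / N) * ((∑ i, coulombPot g μθ (x i)) - ∫ w, coulombPot g μθ w ∂μθ)
        - β * C := by
    rw [hsmul f, hf]
    simp only [hdec]
    rw [show (fun z => -β * (φ z + C)) = fun z => -β * φ z + (-β * C) by
      funext z; ring]
    rw [integral_add (hφint.const_mul (-β)) (integrable_const _),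
      MeasureTheory.integral_const_mul, hφint_val, integral_const, Measure.real, hmass, smul_eq_mul]
    field_simp
    ring
  -- put everything together
  have key : Real.exp (-(β / N) * ((∑ i, coulombPot g μθ (x i))
        - ∫ w, coulombPot g μθ w ∂μθ) - β * C)
      ≤ (1 / N) * ∫ z, Real.exp (-β * jellium g μθ (Fin.cons z x)) ∂μθ := by
    rw [← hfval, ← hsmul]
    exact hjensen
  calc Real.exp (-β * jellium g μθ (Fin.cons y x))
      = Real.exp ((β / N) * ((∑ i, coulombPot g μθ (x i))
            - ∫ z, coulombPot g μθ z ∂μθ)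
          - β * ((∑ i, g (y - x i)) - coulombPot g μθ y))
        * Real.exp (-(β / N) * ((∑ i, coulombPot g μθ (x i))
            - ∫ w, coulombPot g μθ w ∂μθ) - β * C) := by
        rw [← Real.exp_add, hdec y, hφdef]
        congr 1
        field_simp
        ring
    _ ≤ _ := by
        apply mul_le_mul_of_nonneg_left key (le_of_lt (Real.exp_pos _))
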